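/- In a finite MDP with transition kernel p, rewards in [0,1], and discount γ ∈ [0,1): if a stationary policy π and the optimal value functions satisfy v^π(s) ≤ max_b q^π(s,b) ≤ v^π(s) + c for all states s (with c ≥ 0), then max_s (v*(s) − v^π(s)) ≤ c/(1−γ). -/

import Mathlib

open Finset

/-- In a finite MDP with rewards in [0,1] and discount
`γ ∈ [0,1)`: if a stationary deterministic policy `π` satisfies
`v^π(s) ≤ max_b q^π(s,b) ≤ v^π(s) + c` for all states `s` (with `c ≥ 0`), then
`max_s (v*(s) − v^π(s)) ≤ c/(1−γ)`. -/
theorem stmt_16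
    {S Bt R : Type*} [Fintype S] [Nonempty S] [Fintype Bt] [Nonempty Bt]
    [Fintype R]
    (γ : ℝ) (hγ0 : 0 ≤ γ) (hγ1 : γ < 1)
    (ρ : R → ℝ) (hρ : ∀ r, ρ r ∈ Set.Icc (0 : ℝ) 1)
    -- the finite MDP transition kernel p(s' r | s b)
    (p : S → Bt → S → R → ℝ)
    (hp0 : ∀ s b s' r, 0 ≤ p s b s' r)
    (hp1 : ∀ s b, ∑ s' : S, ∑ r : R, p s b s' r = 1)
    -- a stationary deterministic policy π and its value functions
    (π : S → Bt) (qπ : S → Bt → ℝ) (vπ : S → ℝ)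
    (hqπ : ∀ s b, qπ s b = ∑ s' : S, ∑ r : R, p s b s' r * (ρ r + γ * vπ s'))
    (hvπ : ∀ s, vπ s = qπ s (π s))
    -- the optimal value functions
    (qstar : S → Bt → ℝ) (vstar : S → ℝ)
    (hqstar : ∀ s b,
      qstar s b = ∑ s' : S, ∑ r : R, p s b s' r * (ρ r + γ * vstar s'))
    (hvstar : ∀ s, vstar s = Finset.univ.sup' Finset.univ_nonempty (qstar s))
    -- the near-greediness assumption on π
    (c : ℝ) (hc : 0 ≤ c)
    (hnear : ∀ s,
      vπ s ≤ Finset.univ.sup' Finset.univ_nonempty (qπ s) ∧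
      Finset.univ.sup' Finset.univ_nonempty (qπ s) ≤ vπ s + c) :
    Finset.univ.sup' Finset.univ_nonempty (fun s => vstar s - vπ s)
      ≤ c / (1 - γ) := by
  set M := Finset.univ.sup' Finset.univ_nonempty (fun s => vstar s - vπ s) with hMdef
  have hM : ∀ s, vstar s - vπ s ≤ M := fun s =>
    Finset.le_sup' (fun s => vstar s - vπ s) (Finset.mem_univ s)
  have key : M ≤ γ * M + c := by
    rw [hMdef]
    apply Finset.sup'_le
    intro s _
    have hq : ∀ b : Bt, qstar s b ≤ qπ s b + γ * M := by
      intro b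
      have : qstar s b - qπ s b ≤ γ * M := by
        rw [hqstar, hqπ]
        rw [← Finset.sum_sub_distrib]
        have heq : ∀ s' : S, (∑ r : R, p s b s' r * (ρ r + γ * vstar s')) -
            (∑ r : R, p s b s' r * (ρ r + γ * vπ s')) =
            ∑ r : R, p s b s' r * (γ * (vstar s' - vπ s')) := by
          intro s'
          rw [← Finset.sum_sub_distrib]
          congr 1; ext r; ring
        calc ∑ s' : S, ((∑ r : R, p s b s' r * (ρ r + γ * vstar s')) -
              (∑ r : R, p s b s' r * (ρ r + γ * vπ s')))
            = ∑ s' : S, ∑ r : R, p s b s' r * (γ * (vstar s' - vπ s')) := by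
              exact Finset.sum_congr rfl fun s' _ => heq s'
          _ ≤ ∑ s' : S, ∑ r : R, p s b s' r * (γ * M) := by
              apply Finset.sum_le_sum; intro s' _
              apply Finset.sum_le_sum; intro r _
              exact mul_le_mul_of_nonneg_left
                (mul_le_mul_of_nonneg_left (hM s') hγ0) (hp0 s b s' r)
          _ = (∑ s' : S, ∑ r : R, p s b s' r) * (γ * M) := by
              simp [Finset.sum_mul]
          _ = γ * M := by rw [hp1, one_mul]
      linarith
    have h1 : vstar s ≤ Finset.univ.sup' Finset.univ_nonempty (qπ s) + γ * M := by
      rw [hvstar]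
      apply Finset.sup'_le
      intro b _
      exact le_trans (hq b)
        (add_le_add_left (Finset.le_sup' (qπ s) (Finset.mem_univ b)) _)
    have h2 := (hnear s).2
    linarith
  rw [le_div_iff₀ (by linarith : (0:ℝ) < 1 - γ)]
  nlinarith
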